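/- If the set 𝒜 is closed and convex (i.e., problem (P1) is strongly convexifiable) and inf(P1) > −∞, then the minimum of (P1) is attained at some feasible point x̄ ∈ ℝ^n_+, and min(P1) = sup(D1). -/

import Mathlib

open Pointwise Matrix

lemma clm_apply_prod (k : ℕ) (G : ((Fin k → ℝ) × ℝ) →L[ℝ] ℝ) (y : Fin k → ℝ) (t : ℝ) :
    G (y, t) = ∑ i, y i * G (Pi.single i 1, 0) + t * G (0, 1) := by
  have key : ∀ x : Fin k,
      (((y x • (Pi.single x (1:ℝ) : Fin k → ℝ)), (0:ℝ)) : (Fin k → ℝ) × ℝ)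
        = y x • (((Pi.single x (1:ℝ) : Fin k → ℝ), (0:ℝ)) : (Fin k → ℝ) × ℝ) := by
    intro x; rw [Prod.smul_mk, smul_zero]
  have h1 : ((y, t) : (Fin k → ℝ) × ℝ)
      = (∑ i, y i • (((Pi.single i (1:ℝ) : Fin k → ℝ), (0:ℝ)) : (Fin k → ℝ) × ℝ))
      + t • (((0 : Fin k → ℝ), (1:ℝ)) : (Fin k → ℝ) × ℝ) := by
    ext j
    · simp [Prod.fst_sum, Finset.sum_apply, Pi.single_apply, Finset.sum_ite_eq]
    · simp [Prod.snd_sum]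
  rw [h1, map_add, map_sum, _root_.map_smul]
  simp only [smul_eq_mul]
  congr 1
  refine Finset.sum_congr rfl fun x _ => ?_
  rw [_root_.map_smul, smul_eq_mul]

/-- If the set 𝒜 is closed and convex (strong convexifiability) and
inf(P1) > −∞, then the minimum of (P1) is attained at some feasible point x̄ and
min(P1) = sup(D1). -/
theorem stmt_1 (n m : ℕ) (hn : 1 ≤ n)
    (A : Matrix (Fin n) (Fin n) ℝ) (hA : A.IsSymm)
    (b : Fin n → ℝ) (c : ℝ)
    (A' : Fin (m + 1) → Matrix (Fin n) (Fin n) ℝ) (hA' : ∀ i, (A' i).IsSymm)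
    (b' : Fin (m + 1) → Fin n → ℝ) (c' : Fin (m + 1) → ℝ)
    (f : (Fin n → ℝ) → ℝ) (hf : ∀ x, f x = x ⬝ᵥ A *ᵥ x + b ⬝ᵥ x + c)
    (g : Fin (m + 1) → (Fin n → ℝ) → ℝ)
    (hg : ∀ i x, g i x = x ⬝ᵥ A' i *ᵥ x + b' i ⬝ᵥ x + c' i)
    (hne : ∃ x : Fin n → ℝ, (∀ j, 0 ≤ x j) ∧ ∀ i, g i x ≤ 0)
    (𝒜 : Set ((Fin (m + 1) → ℝ) × ℝ))
    (h𝒜 : 𝒜 = (fun x : Fin n → ℝ => ((fun i => g i x), f x)) '' {x | ∀ j, 0 ≤ x j}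
          + {q : (Fin (m + 1) → ℝ) × ℝ | (∀ i, 0 ≤ q.1 i) ∧ 0 ≤ q.2})
    (hclosed : IsClosed 𝒜) (hconvex : Convex ℝ 𝒜)
    (hbdd : (⊥ : EReal) <
        ⨅ x : {x : Fin n → ℝ // (∀ j, 0 ≤ x j) ∧ ∀ i, g i x ≤ 0}, (f x.1 : EReal)) :
    ∃ xbar : Fin n → ℝ, (∀ j, 0 ≤ xbar j) ∧ (∀ i, g i xbar ≤ 0) ∧
      (∀ x : Fin n → ℝ, (∀ j, 0 ≤ x j) → (∀ i, g i x ≤ 0) → f xbar ≤ f x) ∧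
      (f xbar : EReal)
        = ⨆ u : {u : Fin (m + 1) → ℝ // ∀ i, 0 ≤ u i},
            ⨅ x : {x : Fin n → ℝ // ∀ j, 0 ≤ x j},
              ((f x.1 + ∑ i, u.1 i * g i x.1 : ℝ) : EReal) := by
  classical
  obtain ⟨x₀, hx₀pos, hx₀g⟩ := hne
  set S : Set ℝ := f '' {x | (∀ j, 0 ≤ x j) ∧ ∀ i, g i x ≤ 0} with hS
  have hSne : S.Nonempty := ⟨f x₀, x₀, ⟨hx₀pos, hx₀g⟩, rfl⟩
  -- S is bounded below
  have hbddS : BddBelow S := by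
    by_contra hnb
    rw [not_bddBelow_iff] at hnb
    obtain ⟨r, hr1, hr2⟩ := EReal.lt_iff_exists_real_btwn.mp hbdd
    obtain ⟨v, ⟨x, hxF, rfl⟩, hv⟩ := hnb r
    have h1 : (⨅ x : {x : Fin n → ℝ // (∀ j, 0 ≤ x j) ∧ ∀ i, g i x ≤ 0}, (f x.1 : EReal))
        ≤ (f x : EReal) := iInf_le (ι := {x : Fin n → ℝ // (∀ j, 0 ≤ x j) ∧ ∀ i, g i x ≤ 0}) _ ⟨x, hxF⟩
    have h2 : (f x : EReal) < (r : EReal) := by exact_mod_cast hv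
    exact absurd hr2 (not_lt.mpr ((h1.trans h2.le)))
  set μ : ℝ := sInf S with hμ
  have hμle : ∀ x : Fin n → ℝ, (∀ j, 0 ≤ x j) → (∀ i, g i x ≤ 0) → μ ≤ f x :=
    fun x hx1 hx2 => csInf_le hbddS ⟨x, ⟨hx1, hx2⟩, rfl⟩
  -- 𝒜 is stable under adding the nonnegative cone
  have haddA : ∀ z ∈ 𝒜, ∀ q : (Fin (m+1) → ℝ) × ℝ, (∀ i, 0 ≤ q.1 i) → 0 ≤ q.2 →
      z + q ∈ 𝒜 := by
    intro z hz q hq1 hq2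
    rw [h𝒜] at hz ⊢
    obtain ⟨a, ha, p, hp, rfl⟩ := Set.mem_add.mp hz
    refine Set.mem_add.mpr ⟨a, ha, p + q, ⟨?_, ?_⟩, (add_assoc _ _ _).symm⟩
    · exact fun i => add_nonneg (hp.1 i) (hq1 i)
    · exact add_nonneg hp.2 hq2
  have hmemA : ∀ x : Fin n → ℝ, (∀ j, 0 ≤ x j) → ((fun i => g i x), f x) ∈ 𝒜 := by
    intro x hx
    rw [h𝒜]
    exact Set.mem_add.mpr ⟨_, ⟨x, hx, rfl⟩, 0, ⟨fun i => le_refl 0, le_refl 0⟩, add_zero _⟩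
  have hmemA0 : ∀ x : Fin n → ℝ, (∀ j, 0 ≤ x j) → (∀ i, g i x ≤ 0) →
      (((0 : Fin (m+1) → ℝ), f x) : (Fin (m+1) → ℝ) × ℝ) ∈ 𝒜 := by
    intro x hx1 hx2
    have h := haddA _ (hmemA x hx1) ((fun i => -g i x), 0)
      (fun i => neg_nonneg.mpr (hx2 i)) le_rfl
    have heq : (((fun i => g i x), f x) : (Fin (m+1) → ℝ) × ℝ) + ((fun i => -g i x), (0:ℝ))
        = ((0 : Fin (m+1) → ℝ), f x) := by
      ext i <;> simp
    rwa [heq] at h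
  -- (0, μ) ∈ 𝒜 by closedness
  have hμA : (((0 : Fin (m+1) → ℝ), μ) : (Fin (m+1) → ℝ) × ℝ) ∈ 𝒜 := by
    rw [← hclosed.closure_eq, Metric.mem_closure_iff]
    intro ε hε
    obtain ⟨v, hvS, hvlt⟩ := Real.lt_sInf_add_pos hSne hε
    obtain ⟨x, hxF, rfl⟩ := hvS
    refine ⟨((0 : Fin (m+1) → ℝ), f x), hmemA0 x hxF.1 hxF.2, ?_⟩
    have h1 : μ ≤ f x := hμle x hxF.1 hxF.2
    rw [Prod.dist_eq]
    have h2 : dist μ (f x) < ε := by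
      rw [Real.dist_eq, abs_sub_comm, abs_of_nonneg (by linarith)]
      linarith
    simp only [dist_self]
    rw [max_eq_right dist_nonneg]
    exact h2
  -- extract the minimizer
  rw [h𝒜] at hμA
  obtain ⟨a, ⟨xbar, hxbar, rfl⟩, q, hq, hsum⟩ := Set.mem_add.mp hμA
  have hg1 : ∀ i, g i xbar ≤ 0 := by
    intro i
    have h := congrArg (fun z : (Fin (m+1) → ℝ) × ℝ => z.1 i) hsum
    simp only [Prod.fst_add, Pi.add_apply, Prod.fst_zero, Pi.zero_apply] at h
    have := hq.1 i
    linarith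
  have hf1 : f xbar ≤ μ := by
    have h := congrArg Prod.snd hsum
    simp only [Prod.snd_add] at h
    have := hq.2
    linarith
  have hfeq : f xbar = μ := le_antisymm hf1 (hμle xbar hxbar hg1)
  -- weak duality
  have hweak : (⨆ u : {u : Fin (m + 1) → ℝ // ∀ i, 0 ≤ u i},
      ⨅ x : {x : Fin n → ℝ // ∀ j, 0 ≤ x j},
        ((f x.1 + ∑ i, u.1 i * g i x.1 : ℝ) : EReal)) ≤ (μ : EReal) := by
    refine iSup_le fun u => ?_
    refine le_trans (iInf_le _ ⟨xbar, hxbar⟩) ?_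
    rw [EReal.coe_le_coe_iff]
    have hs : ∑ i, u.1 i * g i xbar ≤ 0 :=
      Finset.sum_nonpos fun i _ => mul_nonpos_iff.mpr (Or.inl ⟨u.2 i, hg1 i⟩)
    linarith
  -- strong duality
  have hstrong : (μ : EReal) ≤ ⨆ u : {u : Fin (m + 1) → ℝ // ∀ i, 0 ≤ u i},
      ⨅ x : {x : Fin n → ℝ // ∀ j, 0 ≤ x j},
        ((f x.1 + ∑ i, u.1 i * g i x.1 : ℝ) : EReal) := by
    by_contra hlt
    push_neg at hlt
    obtain ⟨r, hr1, hr2⟩ := EReal.lt_iff_exists_real_btwn.mp hlt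
    have hrμ : r < μ := by exact_mod_cast hr2
    have hnotmem : (((0 : Fin (m+1) → ℝ), r) : (Fin (m+1) → ℝ) × ℝ) ∉ 𝒜 := by
      intro hmem
      rw [h𝒜] at hmem
      obtain ⟨a, ⟨x, hx, rfl⟩, q', hq', hsum'⟩ := Set.mem_add.mp hmem
      have hgix : ∀ i, g i x ≤ 0 := by
        intro i
        have h := congrArg (fun z : (Fin (m+1) → ℝ) × ℝ => z.1 i) hsum'
        simp only [Prod.fst_add, Pi.add_apply, Prod.fst_zero, Pi.zero_apply] at h
        have := hq'.1 i
        linarith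
      have hfx : f x ≤ r := by
        have h := congrArg Prod.snd hsum'
        simp only [Prod.snd_add] at h
        have := hq'.2
        linarith
      have := hμle x hx hgix
      linarith
    obtain ⟨G, α, hGp, hGA⟩ := geometric_hahn_banach_point_closed hconvex hclosed hnotmem
    set u : Fin (m+1) → ℝ := fun i => G (Pi.single i 1, 0) with hu
    set u₀ : ℝ := G ((0 : Fin (m+1) → ℝ), 1) with hu0
    have hexp : ∀ (y : Fin (m+1) → ℝ) (t : ℝ), G (y, t) = ∑ i, y i * u i + t * u₀ :=
      fun y t => clm_apply_prod _ G y t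
    have hGval : ∀ x : Fin n → ℝ, G ((fun i => g i x), f x) = ∑ i, g i x * u i + f x * u₀ :=
      fun x => by simpa using hexp (fun i => g i x) (f x)
    have hGpval : G ((0 : Fin (m+1) → ℝ), r) = r * u₀ := by
      rw [hexp]; simp
    have hz₀ : (((fun i => g i x₀), f x₀) : (Fin (m+1) → ℝ) × ℝ) ∈ 𝒜 := hmemA x₀ hx₀pos
    have hGz₀ : α < ∑ i, g i x₀ * u i + f x₀ * u₀ := by
      have := hGA _ hz₀; rwa [hGval] at this
    set V : ℝ := ∑ i, g i x₀ * u i + f x₀ * u₀ with hV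
    -- all the coefficients are nonnegative
    have hcoef : ∀ (q : (Fin (m+1) → ℝ) × ℝ), (∀ i, 0 ≤ q.1 i) → 0 ≤ q.2 →
        ∀ t : ℝ, 0 ≤ t → α < V + t * G q := by
      intro q hq1 hq2 t ht
      have hz : (((fun i => g i x₀), f x₀) : (Fin (m+1) → ℝ) × ℝ) + t • q ∈ 𝒜 := by
        refine haddA _ hz₀ _ (fun j => ?_) ?_
        · rw [Prod.smul_fst]; exact smul_nonneg ht (hq1 j)
        · rw [Prod.smul_snd]; exact smul_nonneg ht hq2
      have h := hGA _ hz
      rw [map_add, _root_.map_smul, smul_eq_mul, hGval] at h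
      exact h
    have hqnonneg : ∀ (q : (Fin (m+1) → ℝ) × ℝ), (∀ i, 0 ≤ q.1 i) → 0 ≤ q.2 →
        0 ≤ G q := by
      intro q hq1 hq2
      by_contra hneg
      push_neg at hneg
      have ht : (0:ℝ) ≤ (V - α + 1) / (-G q) :=
        le_of_lt (div_pos (by linarith) (by linarith))
      have h := hcoef q hq1 hq2 _ ht
      have hne : -G q ≠ 0 := by intro h0; simp only [neg_eq_zero] at h0; linarith
      have heq : (V - α + 1) / (-G q) * G q = -(V - α + 1) := by
        rw [div_neg, neg_mul, div_mul_cancel₀ _ (ne_of_lt hneg)]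
      rw [heq] at h
      linarith
    have hui : ∀ i, 0 ≤ u i := by
      intro i
      have := hqnonneg (Pi.single i 1, 0) (fun j => by
        simp [Pi.single_apply]; split <;> norm_num) le_rfl
      exact this
    have hu0nonneg : 0 ≤ u₀ := hqnonneg ((0 : Fin (m+1) → ℝ), 1) (fun j => le_rfl) zero_le_one
    have hu0pos : 0 < u₀ := by
      rcases hu0nonneg.lt_or_eq with h | h
      · exact h
      · exfalso
        have hα : 0 < α := by
          have := hGp; rw [hGpval, ← h, mul_zero] at this; exact this
        have hVle : V ≤ 0 := by
          rw [hV, ← h]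
          simp only [mul_zero, add_zero]
          exact Finset.sum_nonpos fun i _ => mul_nonpos_iff.mpr (Or.inr ⟨hx₀g i, hui i⟩)
        linarith
    -- the key per-x bound
    have hkey : ∀ x : Fin n → ℝ, (∀ j, 0 ≤ x j) → r ≤ f x + ∑ i, (u i / u₀) * g i x := by
      intro x hx
      have h1 : α < ∑ i, g i x * u i + f x * u₀ := by
        have := hGA _ (hmemA x hx); rwa [hGval] at this
      have h2 : r * u₀ < α := by rw [← hGpval]; exact hGp
      have hterm : ∀ i : Fin (m+1), u₀ * (u i / u₀ * g i x) = g i x * u i := by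
        intro i; field_simp
      have h3 : u₀ * (f x + ∑ i, u i / u₀ * g i x) = ∑ i, g i x * u i + f x * u₀ := by
        rw [mul_add, Finset.mul_sum]
        rw [Finset.sum_congr rfl fun i _ => hterm i]
        ring
      have h5 : u₀ * r < u₀ * (f x + ∑ i, u i / u₀ * g i x) := by
        rw [h3]
        have hcomm : u₀ * r = r * u₀ := mul_comm _ _
        linarith
      exact le_of_lt ((mul_lt_mul_iff_right₀ hu0pos).mp h5)
    have hrle : (r : EReal) ≤ ⨆ u' : {u' : Fin (m + 1) → ℝ // ∀ i, 0 ≤ u' i},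
        ⨅ x : {x : Fin n → ℝ // ∀ j, 0 ≤ x j},
          ((f x.1 + ∑ i, u'.1 i * g i x.1 : ℝ) : EReal) := by
      refine le_trans ?_ (le_iSup _ ⟨fun i => u i / u₀, fun i => div_nonneg (hui i) hu0pos.le⟩)
      refine le_iInf fun x => ?_
      exact EReal.coe_le_coe_iff.mpr (hkey x.1 x.2)
    exact absurd hrle (not_le.mpr hr1)
  refine ⟨xbar, hxbar, hg1, fun x hx hgx => hfeq ▸ hμle x hx hgx, ?_⟩
  rw [hfeq]
  exact le_antisymm hstrong hweak
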